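/- Let f be a probability density on [-1,1] supported there, and for t, x with 0 < t < 1 and x > 1 let q denote the conditional density of Y ~ N(x,t) given |Y| \le 1. Then for any constant C' > 0, P_{y ~ q}(y < 1 - \sqrt{2C' t \log(1/t)}) < t^{C'}. -/

import Mathlib

open MeasureTheory Real

/-- Density of `N(0,t)`. -/
noncomputable def gaussDensity (t x : ℝ) : ℝ :=
  (Real.sqrt (2 * Real.pi * t))⁻¹ * Real.exp (-x ^ 2 / (2 * t))

/-- For `0 < t < 1`, `x > 1`, and the conditional density `q` of `Y ~ N(x,t)` given `|Y| ≤ 1`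
(so that probabilities under `q` are ratios of Gaussian integrals over subsets of `[-1,1]`),
for any constant `C' > 0`: `P_{y~q}(y < 1 - √(2C' t log(1/t))) < t^{C'}`. -/
theorem conditional_tail_bound (t x C' : ℝ) (ht0 : 0 < t) (ht1 : t < 1)
    (hx : 1 < x) (hC' : 0 < C') :
    (∫ y in Set.Ico (-1 : ℝ) (1 - Real.sqrt (2 * C' * t * Real.log (1 / t))),
        gaussDensity t (x - y)) /
      (∫ y in Set.Icc (-1 : ℝ) 1, gaussDensity t (x - y))
      < t ^ C' := by
  have hrpow : (0:ℝ) < t ^ C' := Real.rpow_pos_of_pos ht0 C'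
  set s : ℝ := Real.sqrt (2 * C' * t * Real.log (1 / t)) with hs_def
  have hlog : 0 < Real.log (1 / t) := Real.log_pos (one_lt_one_div ht0 ht1)
  have harg : 0 < 2 * C' * t * Real.log (1 / t) := by positivity
  have hs0 : 0 < s := Real.sqrt_pos.mpr harg
  have hs2 : s ^ 2 = 2 * C' * t * Real.log (1 / t) := Real.sq_sqrt harg.le
  by_cases hs : 2 ≤ s
  · -- numerator region is empty
    have : Set.Ico (-1 : ℝ) (1 - s) = ∅ := Set.Ico_eq_empty (by intro h; linarith)
    rw [this]
    simpa using hrpow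
  push_neg at hs
  set g : ℝ → ℝ := fun y => gaussDensity t (x - y) with hg_def
  have hgc : Continuous g := by
    unfold g
    unfold gaussDensity
    fun_prop
  have hgnn : ∀ y, 0 ≤ g y := by
    intro y
    unfold g
    unfold gaussDensity
    positivity
  -- denominator positivity
  have hD : 0 < ∫ y in Set.Icc (-1 : ℝ) 1, g y := by
    rw [MeasureTheory.integral_Icc_eq_integral_Ioc,
      ← intervalIntegral.integral_of_le (by norm_num : (-1:ℝ) ≤ 1)]
    apply intervalIntegral.intervalIntegral_pos_of_pos_on
    · exact (hgc.intervalIntegrable _ _)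
    · intro y _
      unfold g
      unfold gaussDensity
      positivity
    · norm_num
  set E : ℝ := Real.exp (-(2 * (x - 1) * s + s ^ 2) / (2 * t)) with hE_def
  -- pointwise bound on the numerator region
  have key : ∀ y ∈ Set.Ico (-1 : ℝ) (1 - s), g y ≤ E * g (y + s) := by
    intro y hy
    unfold g E
    unfold gaussDensity
    rw [mul_left_comm, ← Real.exp_add]
    have hc : (0:ℝ) ≤ (Real.sqrt (2 * Real.pi * t))⁻¹ := by positivity
    apply mul_le_mul_of_nonneg_left _ hc
    apply Real.exp_le_exp.mpr
    rw [← add_div, div_le_div_iff₀ (by positivity) (by positivity)]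
    have h1 : x - 1 + s ≤ x - y := by linarith [hy.2.le]
    have h2 : s * (x - 1 + s) ≤ s * (x - y) := mul_le_mul_of_nonneg_left h1 hs0.le
    have h3 : 0 ≤ (s * (x - y) - s * (x - 1 + s)) * (2 * t) :=
      mul_nonneg (by linarith) (by linarith)
    nlinarith [h3]
  have hint1 : IntegrableOn g (Set.Ico (-1 : ℝ) (1 - s)) :=
    (hgc.integrableOn_Icc).mono_set Set.Ico_subset_Icc_self
  have hint2 : IntegrableOn (fun y => E * g (y + s)) (Set.Ico (-1 : ℝ) (1 - s)) := by
    have hc2 : Continuous (fun y => E * g (y + s)) := by fun_prop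
    exact hc2.integrableOn_Icc.mono_set Set.Ico_subset_Icc_self
  have step1 : (∫ y in Set.Ico (-1 : ℝ) (1 - s), g y)
      ≤ ∫ y in Set.Ico (-1 : ℝ) (1 - s), E * g (y + s) :=
    setIntegral_mono_on hint1 hint2 measurableSet_Ico key
  have step2 : (∫ y in Set.Ico (-1 : ℝ) (1 - s), E * g (y + s))
      = E * ∫ y in Set.Ico (-1 : ℝ) (1 - s), g (y + s) := integral_const_mul _ _
  have step3 : (∫ y in Set.Ico (-1 : ℝ) (1 - s), g (y + s))
      ≤ ∫ y in Set.Icc (-1 : ℝ) 1, g y := by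
    have h1 : (∫ y in Set.Ico (-1 : ℝ) (1 - s), g (y + s))
        = ∫ y in Set.Ioc (-1 + s) 1, g y := by
      rw [MeasureTheory.integral_Ico_eq_integral_Ioo,
        ← MeasureTheory.integral_Ioc_eq_integral_Ioo,
        ← intervalIntegral.integral_of_le (by linarith : (-1:ℝ) ≤ 1 - s),
        intervalIntegral.integral_comp_add_right g s,
        intervalIntegral.integral_of_le (by linarith : (-1 + s : ℝ) ≤ 1 - s + s)]
      norm_num
    rw [h1]
    apply setIntegral_mono_set (hgc.integrableOn_Icc)
    · exact Filter.Eventually.of_forall fun y => hgnn y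
    · apply HasSubset.Subset.eventuallyLE
      intro y hy
      exact ⟨by linarith [hy.1], hy.2⟩
  have hNED : (∫ y in Set.Ico (-1 : ℝ) (1 - s), g y)
      ≤ E * ∫ y in Set.Icc (-1 : ℝ) 1, g y := by
    calc (∫ y in Set.Ico (-1 : ℝ) (1 - s), g y)
        ≤ E * ∫ y in Set.Ico (-1 : ℝ) (1 - s), g (y + s) := step1.trans step2.le
      _ ≤ E * ∫ y in Set.Icc (-1 : ℝ) 1, g y :=
          mul_le_mul_of_nonneg_left step3 (Real.exp_nonneg _)
  have hdiv : (∫ y in Set.Ico (-1 : ℝ) (1 - s), g y)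
      / (∫ y in Set.Icc (-1 : ℝ) 1, g y) ≤ E := (div_le_iff₀ hD).mpr hNED
  refine lt_of_le_of_lt hdiv ?_
  -- E < t ^ C'
  rw [hE_def, Real.rpow_def_of_pos ht0]
  apply Real.exp_lt_exp.mpr
  have hlog' : Real.log (1 / t) = -Real.log t := by
    rw [one_div, Real.log_inv]
  have hs2' : s ^ 2 / (2 * t) = -(C' * Real.log t) := by
    rw [hs2, hlog']
    field_simp
  have hpos : 0 < 2 * (x - 1) * s / (2 * t) :=
    div_pos (by nlinarith) (by linarith)
  have : -(2 * (x - 1) * s + s ^ 2) / (2 * t)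
      = -(2 * (x - 1) * s / (2 * t)) - s ^ 2 / (2 * t) := by ring
  rw [this, hs2']
  nlinarith [hpos]
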